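/- Let m and n be positive integers. The two continuous homomorphisms U_m → U_{mn} given by A ↦ A ⊗ I_n and A ↦ I_n ⊗ A (Kronecker product with the identity on the right, respectively on the left) are homotopic as continuous maps U_m → U_{mn}. -/

import Mathlib

open Matrix Kronecker unitInterval Topology

noncomputable section

/-- The unitary group `U_n` of `n × n` complex matrices, with the subspace topology,
based at the identity matrix. -/
abbrev U (n : ℕ) : Type := Matrix.unitaryGroup (Fin n) ℂ

namespace Paper

/-! ### Reindexing unitary matrices -/

/-- Reindexing a unitary matrix along an equivalence of index types. -/
def uReindex {ι κ : Type} [Fintype ι] [DecidableEq ι] [Fintype κ] [DecidableEq κ]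
    (e : ι ≃ κ) (A : Matrix.unitaryGroup ι ℂ) : Matrix.unitaryGroup κ ℂ :=
  ⟨Matrix.reindex e e A.1, by
    rw [Matrix.mem_unitaryGroup_iff]
    have h : star ((Matrix.reindex e e) A.1) = Matrix.reindex e e (star A.1) := by
      simp [Matrix.star_eq_conjTranspose, Matrix.reindex_apply, Matrix.conjTranspose_submatrix]
    rw [h, Matrix.reindex_apply, Matrix.reindex_apply, Matrix.submatrix_mul_equiv, A.2.2,
      Matrix.submatrix_one_equiv]⟩

@[simp] theorem uReindex_val {ι κ : Type} [Fintype ι] [DecidableEq ι] [Fintype κ] [DecidableEq κ]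
    (e : ι ≃ κ) (A : Matrix.unitaryGroup ι ℂ) :
    (uReindex e A).1 = Matrix.reindex e e A.1 := rfl

theorem continuous_uReindex {ι κ : Type} [Fintype ι] [DecidableEq ι] [Fintype κ] [DecidableEq κ]
    (e : ι ≃ κ) : Continuous (uReindex (e := e)) :=
  Continuous.subtype_mk ((continuous_subtype_val).matrix_reindex e e) _

@[simp] theorem uReindex_one {ι κ : Type} [Fintype ι] [DecidableEq ι] [Fintype κ] [DecidableEq κ]
    (e : ι ≃ κ) : uReindex e (1 : Matrix.unitaryGroup ι ℂ) = 1 :=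
  Subtype.ext (by simp [uReindex, Matrix.reindex_apply, Matrix.submatrix_one_equiv])

/-- Transport along an equality of sizes. -/
def uCast {m k : ℕ} (h : m = k) (A : U m) : U k := uReindex (finCongr h) A

theorem continuous_uCast {m k : ℕ} (h : m = k) : Continuous (uCast h) :=
  continuous_uReindex _

@[simp] theorem uCast_one {m k : ℕ} (h : m = k) : uCast h (1 : U m) = 1 := uReindex_one _

/-! ### Block sums and Kronecker products of unitary matrices -/

/-- The block sum `diag(A, B)` of unitary matrices, as an element of `U (m + n)`. -/
def bdiag2 {m n : ℕ} (A : U m) (B : U n) : U (m + n) :=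
  ⟨Matrix.reindex finSumFinEquiv finSumFinEquiv (Matrix.fromBlocks A.1 0 0 B.1), by
    rw [Matrix.mem_unitaryGroup_iff]
    have h : star ((Matrix.reindex finSumFinEquiv finSumFinEquiv)
        (Matrix.fromBlocks A.1 0 0 B.1)) = Matrix.reindex finSumFinEquiv finSumFinEquiv
        (star (Matrix.fromBlocks A.1 0 0 B.1)) := by
      simp [Matrix.star_eq_conjTranspose, Matrix.reindex_apply, Matrix.conjTranspose_submatrix]
    have hA : A.1 * A.1ᴴ = 1 := A.2.2
    have hB : B.1 * B.1ᴴ = 1 := B.2.2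
    have h2 : Matrix.fromBlocks A.1 0 0 B.1 * star (Matrix.fromBlocks A.1 0 0 B.1) = 1 := by
      simp [Matrix.star_eq_conjTranspose, Matrix.fromBlocks_conjTranspose,
        Matrix.fromBlocks_multiply, hA, hB, Matrix.fromBlocks_one]
    rw [h, Matrix.reindex_apply, Matrix.reindex_apply, Matrix.submatrix_mul_equiv, h2,
      Matrix.submatrix_one_equiv]⟩

@[simp] theorem bdiag2_one {m n : ℕ} : bdiag2 (1 : U m) (1 : U n) = 1 :=
  Subtype.ext (by simp [bdiag2, Matrix.fromBlocks_one, Matrix.reindex_apply,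
    Matrix.submatrix_one_equiv])

theorem continuous_bdiag2 {m n : ℕ} :
    Continuous (fun p : U m × U n => bdiag2 p.1 p.2) := by
  apply Continuous.subtype_mk
  exact ((Continuous.matrix_fromBlocks (continuous_subtype_val.comp continuous_fst)
    continuous_const continuous_const
    (continuous_subtype_val.comp continuous_snd)).matrix_reindex _ _)

/-- The equivalence used to index an array of `r` blocks of size `n` by `Fin (r * n)`. -/
def bde (r n : ℕ) : (Fin n × Fin r) ≃ Fin (r * n) :=
  (Equiv.prodComm (Fin n) (Fin r)).trans finProdFinEquiv

/-- The block-diagonal sum `diag(A 1, …, A r)` of a family of unitary matrices. -/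
def blockDiagU {r n : ℕ} (A : Fin r → U n) : U (r * n) :=
  ⟨Matrix.reindex (bde r n) (bde r n) (Matrix.blockDiagonal fun j => (A j).1), by
    rw [Matrix.mem_unitaryGroup_iff]
    have h : star ((Matrix.reindex (bde r n) (bde r n))
        (Matrix.blockDiagonal fun j => (A j).1)) = Matrix.reindex (bde r n) (bde r n)
        (star (Matrix.blockDiagonal fun j => (A j).1)) := by
      simp [Matrix.star_eq_conjTranspose, Matrix.reindex_apply, Matrix.conjTranspose_submatrix]
    have hA : ∀ j, (A j).1 * ((A j).1)ᴴ = 1 := fun j => (A j).2.2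
    have h2 : (Matrix.blockDiagonal fun j => (A j).1) *
        star (Matrix.blockDiagonal fun j => (A j).1) = 1 := by
      rw [Matrix.star_eq_conjTranspose, Matrix.blockDiagonal_conjTranspose,
        ← Matrix.blockDiagonal_mul]
      have h1 : (fun k : Fin r => (A k).1 * ((A k).1)ᴴ) = (1 : Fin r → Matrix (Fin n) (Fin n) ℂ) :=
        funext fun k => hA k
      rw [h1, Matrix.blockDiagonal_one]
    rw [h, Matrix.reindex_apply, Matrix.reindex_apply, Matrix.submatrix_mul_equiv, h2,
      Matrix.submatrix_one_equiv]⟩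

@[simp] theorem blockDiagU_one {r n : ℕ} : blockDiagU (fun _ : Fin r => (1 : U n)) = 1 := by
  apply Subtype.ext
  have h1 : (fun _ : Fin r => ((1 : U n) : Matrix (Fin n) (Fin n) ℂ)) =
      (1 : Fin r → Matrix (Fin n) (Fin n) ℂ) := rfl
  show Matrix.reindex (bde r n) (bde r n) (Matrix.blockDiagonal _) = _
  rw [h1, Matrix.blockDiagonal_one, Matrix.reindex_apply, Matrix.submatrix_one_equiv]
  rfl

theorem continuous_blockDiagU {X : Type} [TopologicalSpace X] {r n : ℕ} {A : X → Fin r → U n}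
    (hA : ∀ j, Continuous fun x => A x j) : Continuous fun x => blockDiagU (A x) := by
  apply Continuous.subtype_mk
  exact (Continuous.matrix_blockDiagonal
    (continuous_pi fun j => (continuous_subtype_val.comp (hA j)))).matrix_reindex _ _

/-- The Kronecker product of unitary matrices, as an element of `U (m * n)`. -/
def kronU {m n : ℕ} (A : U m) (B : U n) : U (m * n) :=
  ⟨Matrix.reindex finProdFinEquiv finProdFinEquiv (A.1 ⊗ₖ B.1), by
    rw [Matrix.mem_unitaryGroup_iff]
    have hstar : ∀ (C : Matrix (Fin m) (Fin m) ℂ) (D : Matrix (Fin n) (Fin n) ℂ),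
        star (C ⊗ₖ D) = star C ⊗ₖ star D := by
      intro C D
      ext ⟨i, j⟩ ⟨k, l⟩
      simp [Matrix.star_eq_conjTranspose, Matrix.conjTranspose_apply,
        Matrix.kroneckerMap_apply, mul_comm]
    have h : star ((Matrix.reindex finProdFinEquiv finProdFinEquiv) (A.1 ⊗ₖ B.1)) =
        Matrix.reindex finProdFinEquiv finProdFinEquiv (star (A.1 ⊗ₖ B.1)) := by
      simp [Matrix.star_eq_conjTranspose, Matrix.reindex_apply, Matrix.conjTranspose_submatrix]
    have h2 : (A.1 ⊗ₖ B.1) * star (A.1 ⊗ₖ B.1) = 1 := by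
      rw [hstar, ← Matrix.mul_kronecker_mul, A.2.2, B.2.2, Matrix.one_kronecker_one]
    rw [h, Matrix.reindex_apply, Matrix.reindex_apply, Matrix.submatrix_mul_equiv, h2,
      Matrix.submatrix_one_equiv]⟩

@[simp] theorem kronU_one {m n : ℕ} : kronU (1 : U m) (1 : U n) = 1 :=
  Subtype.ext (by simp [kronU, Matrix.one_kronecker_one, Matrix.reindex_apply,
    Matrix.submatrix_one_equiv])

theorem continuous_kronU {m n : ℕ} : Continuous fun p : U m × U n => kronU p.1 p.2 := by
  apply Continuous.subtype_mk
  apply Continuous.matrix_reindex _ finProdFinEquiv finProdFinEquiv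
  apply continuous_matrix
  rintro ⟨i, j⟩ ⟨k, l⟩
  simp only [Matrix.kroneckerMap_apply]
  exact ((continuous_subtype_val.comp continuous_fst).matrix_elem i k).mul
    ((continuous_subtype_val.comp continuous_snd).matrix_elem j l)

/-! ### The induced map on homotopy groups -/

/-- The map on generalized loops induced by a continuous basepoint-preserving map. -/
def loopMap {N : Type} {X Y : Type} [TopologicalSpace X] [TopologicalSpace Y]
    (f : C(X, Y)) {x : X} {y : Y} (hf : f x = y) (p : GenLoop N X x) : GenLoop N Y y :=
  ⟨f.comp p.1, fun t ht => by
    simp only [ContinuousMap.comp_apply]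
    rw [p.2 t ht, hf]⟩

/-- The homomorphism `π_k(f)` induced on homotopy groups (based at the given points) by a
continuous basepoint-preserving map `f`, as a function. -/
def πMap (k : ℕ) {X Y : Type} [TopologicalSpace X] [TopologicalSpace Y]
    (f : C(X, Y)) {x : X} {y : Y} (hf : f x = y) :
    HomotopyGroup (Fin k) X x → HomotopyGroup (Fin k) Y y :=
  Quotient.map (loopMap f hf)
    (fun _ _ h => h.elim fun H => ⟨H.compContinuousMap f⟩)

end Paper
/-! ### The standard stabilization and operation maps, as continuous maps -/

namespace Paper

/-- `est_{m,n} : U_m → U_{m+n}`, `A ↦ diag(A, I_n)`. -/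
def est (m n : ℕ) : C(U m, U (m + n)) :=
  ⟨fun A => bdiag2 A 1, continuous_bdiag2.comp (continuous_id.prodMk continuous_const)⟩

theorem est_one (m n : ℕ) : est m n 1 = 1 := bdiag2_one

/-- `U_n → U_{m+n}`, `B ↦ diag(I_m, B)`. -/
def est' (m n : ℕ) : C(U n, U (m + n)) :=
  ⟨fun B => bdiag2 1 B, continuous_bdiag2.comp (continuous_const.prodMk continuous_id)⟩

theorem est'_one (m n : ℕ) : est' m n 1 = 1 := bdiag2_one

/-- `s_j : U_n → U_{rn}` placing `A` in the `j`-th diagonal block (0-indexed) and identity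
blocks elsewhere. -/
def sMap (n r : ℕ) (j : Fin r) : C(U n, U (r * n)) :=
  ⟨fun A => blockDiagU (fun k => if k = j then A else 1), by
    apply continuous_blockDiagU
    intro k
    by_cases hk : k = j
    · simp only [hk, if_true]; exact continuous_id
    · simp only [hk, if_false]; exact continuous_const⟩

theorem sMap_one (n r : ℕ) (j : Fin r) : sMap n r j 1 = 1 := by
  show blockDiagU _ = 1
  have : (fun k : Fin r => if k = j then (1 : U n) else 1) = fun _ => (1 : U n) := by
    funext k; split <;> rfl
  rw [this, blockDiagU_one]

/-- The `r`-fold direct sum `⊕^r : U_n → U_{rn}`, `A ↦ diag(A, …, A)`. -/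
def rSum (n r : ℕ) : C(U n, U (r * n)) :=
  ⟨fun A => blockDiagU (fun _ : Fin r => A), continuous_blockDiagU fun _ => continuous_id⟩

theorem rSum_one (n r : ℕ) : rSum n r 1 = 1 := blockDiagU_one

/-- The direct sum `⊕ : U_m × U_n → U_{m+n}`, `(A, B) ↦ diag(A, B)`. -/
def dsum (m n : ℕ) : C(U m × U n, U (m + n)) :=
  ⟨fun p => bdiag2 p.1 p.2, continuous_bdiag2⟩

theorem dsum_one (m n : ℕ) : dsum m n 1 = 1 := bdiag2_one

/-- The tensor (Kronecker) product `⊗ : U_m × U_n → U_{mn}`. -/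
def tens (m n : ℕ) : C(U m × U n, U (m * n)) :=
  ⟨fun p => kronU p.1 p.2, continuous_kronU⟩

theorem tens_one (m n : ℕ) : tens m n 1 = 1 := kronU_one

/-- `A ↦ A ⊗ I_n : U_m → U_{mn}`. -/
def kronR (m n : ℕ) : C(U m, U (m * n)) :=
  ⟨fun A => kronU A 1, continuous_kronU.comp (continuous_id.prodMk continuous_const)⟩

/-- `A ↦ I_n ⊗ A : U_m → U_{mn}`. -/
def kronL (m n : ℕ) : C(U m, U (m * n)) :=
  ⟨fun A => uCast (Nat.mul_comm n m) (kronU 1 A),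
    (continuous_uCast _).comp (continuous_kronU.comp (continuous_const.prodMk continuous_id))⟩

/-- The stabilization `σ : U_k → U_N`, `A ↦ diag(A, I_{N-k})`, for `k ≤ N`. -/
def sigmaMap (k N : ℕ) (h : k ≤ N) : C(U k, U N) :=
  ⟨fun A => uCast (Nat.add_sub_cancel' h) (bdiag2 A 1),
    (continuous_uCast _).comp (continuous_bdiag2.comp (continuous_id.prodMk continuous_const))⟩

theorem sigmaMap_one (k N : ℕ) (h : k ≤ N) : sigmaMap k N h 1 = 1 := by
  show uCast _ (bdiag2 1 1) = 1
  rw [bdiag2_one, uCast_one]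

/-- The `r`-fold Kronecker power `A ↦ A ⊗ ⋯ ⊗ A : U_k → U_{k^r}`. -/
def kronPow {k : ℕ} : (r : ℕ) → U k → U (k ^ r)
  | 0 => fun _ => uCast (pow_zero k).symm 1
  | r + 1 => fun A => uCast (pow_succ k r).symm (kronU (kronPow r A) A)

theorem continuous_kronPow {k : ℕ} (r : ℕ) : Continuous fun A : U k => kronPow r A := by
  induction r with
  | zero => exact continuous_const
  | succ r ih =>
    show Continuous fun A : U k => uCast (pow_succ k r).symm (kronU (kronPow r A) A)
    exact (continuous_uCast _).comp (continuous_kronU.comp (ih.prodMk continuous_id))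

theorem kronPow_one {k : ℕ} (r : ℕ) : kronPow r (1 : U k) = 1 := by
  induction r with
  | zero => exact uCast_one _
  | succ r ih =>
    show uCast _ (kronU (kronPow r 1) 1) = 1
    rw [ih, kronU_one, uCast_one]

/-- The `r`-fold Kronecker power as a continuous map. -/
def kronPowC (n r : ℕ) : C(U n, U (n ^ r)) := ⟨kronPow r, continuous_kronPow r⟩

theorem kronPowC_one (n r : ℕ) : kronPowC n r 1 = 1 := kronPow_one r

end Paper
namespace Paper


/-! ### Permutation unitaries and paths to the identity -/


theorem permM_conjTranspose {K : ℕ} (e : Equiv.Perm (Fin K)) :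
    (e.toPEquiv.toMatrix : Matrix (Fin K) (Fin K) ℂ)ᴴ = e.symm.toPEquiv.toMatrix := by
  rw [Equiv.toPEquiv_symm, PEquiv.toMatrix_symm]
  ext i j
  simp [Matrix.conjTranspose_apply, PEquiv.toMatrix_apply, apply_ite (star : ℂ → ℂ)]

theorem permM_mul_symm {K : ℕ} (e : Equiv.Perm (Fin K)) :
    (e.toPEquiv.toMatrix : Matrix (Fin K) (Fin K) ℂ) * e.symm.toPEquiv.toMatrix = 1 := by
  rw [← PEquiv.toMatrix_trans, ← Equiv.toPEquiv_trans, Equiv.self_trans_symm,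
    Equiv.toPEquiv_refl, PEquiv.toMatrix_refl]

def permU {K : ℕ} (e : Equiv.Perm (Fin K)) : U K :=
  ⟨e.toPEquiv.toMatrix, by
    rw [Matrix.mem_unitaryGroup_iff, Matrix.star_eq_conjTranspose, permM_conjTranspose,
      permM_mul_symm]⟩

theorem joined_one_permU_swap {K : ℕ} (x y : Fin K) :
    Joined (1 : U K) (permU (Equiv.swap x y)) := by
  set S : Matrix (Fin K) (Fin K) ℂ := (Equiv.swap x y).toPEquiv.toMatrix with hSdef
  have hS : Sᴴ = S := by
    rw [hSdef, permM_conjTranspose, Equiv.symm_swap]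
  have hSS : S * S = 1 := by
    have h := permM_mul_symm (K := K) (Equiv.swap x y)
    rwa [Equiv.symm_swap] at h
  have key : ∀ t : unitInterval,
      (((1 + Complex.exp (Real.pi * t * Complex.I)) / 2) • (1 : Matrix (Fin K) (Fin K) ℂ) +
       ((1 - Complex.exp (Real.pi * t * Complex.I)) / 2) • S) ∈
      Matrix.unitaryGroup (Fin K) ℂ := by
    intro t
    set z : ℂ := Complex.exp (Real.pi * t * Complex.I) with hzdef
    have hz : z * (starRingEnd ℂ) z = 1 := by
      have harg : (starRingEnd ℂ) (↑Real.pi * ↑(t : ℝ) * Complex.I) =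
          -(↑Real.pi * ↑(t : ℝ) * Complex.I) := by
        simp only [_root_.map_mul, Complex.conj_I, Complex.conj_ofReal]
        ring
      rw [hzdef, ← Complex.exp_conj, harg, ← Complex.exp_add]
      simp
    set a : ℂ := (1 + z) / 2
    set b : ℂ := (1 - z) / 2
    rw [Matrix.mem_unitaryGroup_iff, Matrix.star_eq_conjTranspose]
    have h1 : a * (starRingEnd ℂ) a + b * (starRingEnd ℂ) b = 1 := by
      simp only [a, b, map_div₀, map_add, map_sub, _root_.map_one, map_ofNat]
      linear_combination hz / 2
    have h2 : a * (starRingEnd ℂ) b + b * (starRingEnd ℂ) a = 0 := by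
      simp only [a, b, map_div₀, map_add, map_sub, _root_.map_one, map_ofNat]
      linear_combination (-1/2 : ℂ) * hz
    calc (a • (1 : Matrix (Fin K) (Fin K) ℂ) + b • S) * (a • (1 : Matrix (Fin K) (Fin K) ℂ) + b • S)ᴴ
        = (a * (starRingEnd ℂ) a + b * (starRingEnd ℂ) b) • (1 : Matrix (Fin K) (Fin K) ℂ) +
          (a * (starRingEnd ℂ) b + b * (starRingEnd ℂ) a) • S := by
          rw [Matrix.conjTranspose_add, Matrix.conjTranspose_smul, Matrix.conjTranspose_smul,
            Matrix.conjTranspose_one, hS]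
          rw [Matrix.add_mul, Matrix.mul_add, Matrix.mul_add]
          simp only [Matrix.smul_mul, Matrix.mul_smul, smul_smul, hSS, Matrix.one_mul,
            Matrix.mul_one, Complex.star_def]
          module
      _ = 1 := by rw [h1, h2]; simp
  refine ⟨⟨⟨fun t => ⟨_, key t⟩, ?_⟩, ?_, ?_⟩⟩
  · refine Continuous.subtype_mk ?_ _
    have hc : Continuous fun t : unitInterval => Complex.exp (Real.pi * t * Complex.I) := by
      fun_prop
    exact (((continuous_const.add hc).div_const 2).smul continuous_const).add
      (((continuous_const.sub hc).div_const 2).smul continuous_const)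
  · apply Subtype.ext
    show _ = (1 : Matrix (Fin K) (Fin K) ℂ)
    norm_num [Complex.exp_zero]
  · apply Subtype.ext
    show _ = S
    norm_num [Complex.exp_pi_mul_I]

theorem permM_conj {K : ℕ} (e : Equiv.Perm (Fin K)) (M : Matrix (Fin K) (Fin K) ℂ) :
    Matrix.reindex e e M = e.symm.toPEquiv.toMatrix * M * e.toPEquiv.toMatrix := by
  rw [PEquiv.toMatrix_toPEquiv_mul, PEquiv.mul_toMatrix_toPEquiv, Matrix.reindex_apply,
    Matrix.submatrix_submatrix]
  rfl

@[simp] theorem permU_one' {K : ℕ} : permU (1 : Equiv.Perm (Fin K)) = 1 :=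
  Subtype.ext (by simp [permU, Equiv.Perm.one_def, Equiv.toPEquiv_refl, PEquiv.toMatrix_refl])

theorem permU_mul {K : ℕ} (e f : Equiv.Perm (Fin K)) :
    permU (e * f) = permU f * permU e := by
  apply Subtype.ext
  show ((e * f).toPEquiv.toMatrix : Matrix (Fin K) (Fin K) ℂ) =
    f.toPEquiv.toMatrix * e.toPEquiv.toMatrix
  rw [Equiv.Perm.mul_def, Equiv.toPEquiv_trans, PEquiv.toMatrix_trans]

theorem joined_one_mul {K : ℕ} {a b : U K} (ha : Joined 1 a) (hb : Joined 1 b) :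
    Joined 1 (a * b) := by
  obtain ⟨p⟩ := ha; obtain ⟨q⟩ := hb
  refine ⟨⟨⟨fun t => p t * q t, ?_⟩, by simp, by simp⟩⟩
  exact Continuous.subtype_mk ((continuous_subtype_val.comp p.continuous).matrix_mul
    (continuous_subtype_val.comp q.continuous)) _

theorem joined_one_permU {K : ℕ} (f : Equiv.Perm (Fin K)) : Joined (1 : U K) (permU f) := by
  refine Equiv.Perm.swap_induction_on f ?_ ?_
  · rw [permU_one']
  · intro g x y _ hg
    rw [permU_mul]
    exact joined_one_mul hg (joined_one_permU_swap x y)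

/-! ### The permutation relating the two Kronecker embeddings -/

/-- The permutation of `Fin (m * n)` conjugating `A ⊗ I_n` into `I_n ⊗ A`. -/
def e0 (m n : ℕ) : Equiv.Perm (Fin (m * n)) :=
  finProdFinEquiv.symm.trans ((Equiv.prodComm (Fin m) (Fin n)).trans
    (finProdFinEquiv.trans (finCongr (Nat.mul_comm n m))))

theorem kronL_eq_reindex {m n : ℕ} (A : U m) :
    (kronL m n A).1 = Matrix.reindex (e0 m n) (e0 m n) (kronR m n A).1 := by
  ext i j
  simp only [kronL, kronR, kronU, uCast, uReindex, e0, ContinuousMap.coe_mk,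
    Matrix.reindex_apply, Matrix.submatrix_apply, Equiv.symm_trans_apply,
    Equiv.symm_symm, Equiv.symm_apply_apply, Matrix.kroneckerMap_apply]
  simp [Matrix.one_apply, mul_comm]

/-! ### Statement 5 -/

/-- The maps `A ↦ A ⊗ I_n` and `A ↦ I_n ⊗ A`, `U_m → U_{mn}`, are homotopic. -/
theorem kronR_homotopic_kronL (m n : ℕ) (hm : 0 < m) (hn : 0 < n) :
    (kronR m n).Homotopic (kronL m n) := by
  obtain ⟨γ⟩ := joined_one_permU (e0 m n).symm
  have hmem : ∀ (p : unitInterval × U m),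
      ((γ p.1 : U (m * n)) : Matrix (Fin (m * n)) (Fin (m * n)) ℂ) * (kronR m n p.2).1 *
        star ((γ p.1 : U (m * n)) : Matrix (Fin (m * n)) (Fin (m * n)) ℂ) ∈
        Matrix.unitaryGroup (Fin (m * n)) ℂ :=
    fun p => mul_mem (mul_mem (γ p.1).2 (kronR m n p.2).2) (Unitary.star_mem (γ p.1).2)
  refine ⟨⟨⟨fun p => ⟨_, hmem p⟩, ?_⟩, ?_, ?_⟩⟩
  · refine Continuous.subtype_mk ?_ _
    have hγ : Continuous fun p : unitInterval × U m =>
        ((γ p.1 : U (m * n)) : Matrix (Fin (m * n)) (Fin (m * n)) ℂ) :=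
      continuous_subtype_val.comp (γ.continuous.comp continuous_fst)
    have hk : Continuous fun p : unitInterval × U m => (kronR m n p.2).1 :=
      continuous_subtype_val.comp ((kronR m n).continuous.comp continuous_snd)
    exact (hγ.matrix_mul hk).matrix_mul hγ.matrix_conjTranspose
  · intro A
    apply Subtype.ext
    show ((γ 0 : U (m * n)) : Matrix _ _ ℂ) * (kronR m n A).1 * star _ = (kronR m n A).1
    rw [γ.source]
    simp
  · intro A
    apply Subtype.ext
    show ((γ 1 : U (m * n)) : Matrix _ _ ℂ) * (kronR m n A).1 * star _ = (kronL m n A).1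
    rw [γ.target]
    show ((e0 m n).symm.toPEquiv.toMatrix : Matrix _ _ ℂ) * (kronR m n A).1 *
      star ((e0 m n).symm.toPEquiv.toMatrix : Matrix _ _ ℂ) = _
    rw [Matrix.star_eq_conjTranspose, permM_conjTranspose, Equiv.symm_symm,
      kronL_eq_reindex, permM_conj]

end Paper
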